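/- Suppose Assumptions A and C-2 hold (with g convex). Let ρ > 0, γ^r > 0, x^r, x^{r+1} ∈ X, y^r ∈ Y, and let y^{r+1} = argmax_{y∈Y} f(x^{r+1}, y) − g(y) − (1/(2ρ))‖y − y^r‖² − (γ^r/2)‖y‖². Then (1/ρ)‖y^r − Py^{1/ρ}(y^r + ρ∇_y f(x^r, y^r))‖ ≤ L_y‖x^{r+1} − x^r‖ + (1/ρ + L_y)‖y^{r+1} − y^r‖ + γ^r‖y^{r+1}‖, i.e., the y-block of the stationarity gap at (x^r, y^r) is bounded by the successive differences of the iterates plus the penalty term γ^r‖y^{r+1}‖. -/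

import Mathlib

open scoped RealInnerProductSpace


variable {E : Type*} [NormedAddCommGroup E] [InnerProductSpace ℝ E]

/-- First-order optimality condition for maximizing `F - g` over a convex set. -/
lemma lemA {Y : Set E} (hY : Convex ℝ Y) {g : E → ℝ} (hg : ConvexOn ℝ Set.univ g)
    {F : E → ℝ} {p : E} (hp : p ∈ Y) {u : E} (hu : u ∈ Y) {d : ℝ}
    (hd : HasDerivAt (fun t : ℝ => F (p + t • (u - p))) d 0)
    (hmax : ∀ z ∈ Y, F z - g z ≤ F p - g p) :
    d ≤ g u - g p := by
  set φ : ℝ → ℝ := fun t => F (p + t • (u - p)) with hφ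
  have hφ0 : φ 0 = F p := by simp [hφ]
  have key : ∀ t ∈ Set.Ioc (0:ℝ) 1, slope φ 0 t ≤ g u - g p := by
    intro t ht
    have hmem : p + t • (u - p) ∈ Y := by
      have : (1 - t) • p + t • u ∈ Y :=
        hY hp hu (by linarith [ht.2]) (le_of_lt ht.1) (by ring)
      convert this using 1
      rw [smul_sub, sub_smul, one_smul]; abel
    have hgle : g (p + t • (u - p)) ≤ (1 - t) * g p + t * g u := by
      have : g ((1 - t) • p + t • u) ≤ (1 - t) * g p + t * g u :=
        hg.2 (Set.mem_univ p) (Set.mem_univ u) (by linarith [ht.2]) (le_of_lt ht.1) (by ring)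
      convert this using 2
      rw [smul_sub, sub_smul, one_smul]; abel
    have h1 : φ t - φ 0 ≤ t * (g u - g p) := by
      have h2 : φ t - g (p + t • (u - p)) ≤ F p - g p := hmax _ hmem
      rw [hφ0]; nlinarith [hgle]
    rw [slope_def_field, sub_zero, div_le_iff₀ ht.1]
    linarith [h1]
  have hslope : Filter.Tendsto (slope φ 0) (nhdsWithin 0 (Set.Ioi 0)) (nhds d) := by
    have := hasDerivAt_iff_tendsto_slope.mp hd
    exact this.mono_left (nhdsWithin_mono 0 (fun x hx => ne_of_gt hx))
  refine le_of_tendsto hslope ?_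
  filter_upwards [Ioc_mem_nhdsGT_of_mem (by simp : (0:ℝ) ∈ Set.Ico (0:ℝ) 1)] with t ht
  exact key t ht

/-- Derivative of the squared distance along a line. -/
lemma lineDeriv_normsq (c p u : E) :
    HasDerivAt (fun t : ℝ => ‖(p + t • (u - p)) - c‖ ^ 2) (2 * ⟪p - c, u - p⟫) 0 := by
  have hline : HasDerivAt (fun t : ℝ => (p + t • (u - p)) - c) (u - p) 0 := by
    have h1 : HasDerivAt (fun t : ℝ => t • (u - p)) ((1:ℝ) • (u - p)) 0 :=
      (hasDerivAt_id 0).smul_const (u - p)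
    simpa using ((h1.const_add p).sub_const c)
  have := hline.inner ℝ hline
  have heq : (fun t : ℝ => (⟪(p + t • (u - p)) - c, (p + t • (u - p)) - c⟫ : ℝ))
      = fun t : ℝ => ‖(p + t • (u - p)) - c‖ ^ 2 := by
    funext t; rw [real_inner_self_eq_norm_sq]
  rw [heq] at this
  refine this.congr_deriv ?_
  simp [real_inner_comm]
  ring

/-- Two points satisfying the prox variational inequality are as close as their arguments. -/
lemma lemB {Y : Set E} {g : E → ℝ} {ρ : ℝ} (hρ : 0 < ρ) {p1 p2 w1 w2 : E}
    (hp1 : p1 ∈ Y) (hp2 : p2 ∈ Y)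
    (h1 : ∀ u ∈ Y, ⟪w1 - p1, u - p1⟫ ≤ ρ * (g u - g p1))
    (h2 : ∀ u ∈ Y, ⟪w2 - p2, u - p2⟫ ≤ ρ * (g u - g p2)) :
    ‖p1 - p2‖ ≤ ‖w1 - w2‖ := by
  have hA := h1 p2 hp2
  have hB := h2 p1 hp1
  have h3 : (⟪p1 - p2, p1 - p2⟫ : ℝ) ≤ ⟪w1 - w2, p1 - p2⟫ := by
    have e1 : (⟪w1 - p1, p2 - p1⟫ : ℝ) + ⟪w2 - p2, p1 - p2⟫
        = ⟪p1 - p2, p1 - p2⟫ - ⟪w1 - w2, p1 - p2⟫ := by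
      simp only [inner_sub_left, inner_sub_right]
      ring
    nlinarith [hA, hB]
  have h4 : ‖p1 - p2‖ ^ 2 ≤ ‖w1 - w2‖ * ‖p1 - p2‖ :=
    le_trans (by rw [real_inner_self_eq_norm_sq] at h3; exact h3) (real_inner_le_norm _ _)
  rcases eq_or_lt_of_le (norm_nonneg (p1 - p2)) with h | h
  · rw [← h]; exact norm_nonneg _
  · have := (mul_le_mul_iff_of_pos_right h).mp (by nlinarith [h4] : ‖p1 - p2‖ * ‖p1 - p2‖ ≤ ‖w1 - w2‖ * ‖p1 - p2‖)
    exact this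

/-- Variational inequality for the proximity operator. -/
lemma proxVI {Y : Set E} (hY : Convex ℝ Y) {g : E → ℝ} (hg : ConvexOn ℝ Set.univ g)
    {ρ : ℝ} (hρ : 0 < ρ) {w p : E} (hp : p ∈ Y)
    (hmax : ∀ z ∈ Y, -g z - 1 / (2 * ρ) * ‖z - w‖ ^ 2 ≤ -g p - 1 / (2 * ρ) * ‖p - w‖ ^ 2) :
    ∀ u ∈ Y, ⟪w - p, u - p⟫ ≤ ρ * (g u - g p) := by
  intro u hu
  have hd : HasDerivAt (fun t : ℝ => -(1 / (2 * ρ)) * ‖(p + t • (u - p)) - w‖ ^ 2)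
      ((-(1 / (2 * ρ))) * (2 * ⟪p - w, u - p⟫)) 0 := (lineDeriv_normsq w p u).const_mul _
  have := lemA (F := fun z => -(1 / (2 * ρ)) * ‖z - w‖ ^ 2) hY hg hp hu hd
    (fun z hz => by have := hmax z hz; linarith)
  have e : (-(1 / (2 * ρ))) * (2 * ⟪p - w, u - p⟫) = ρ⁻¹ * ⟪w - p, u - p⟫ := by
    have : (⟪p - w, u - p⟫ : ℝ) = -⟪w - p, u - p⟫ := by
      simp only [inner_sub_left]; ring
    rw [this]; field_simp
  rw [e] at this
  calc ⟪w - p, u - p⟫ = ρ * (ρ⁻¹ * ⟪w - p, u - p⟫) := by field_simp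
    _ ≤ ρ * (g u - g p) := by exact mul_le_mul_of_nonneg_left this (le_of_lt hρ)

set_option maxHeartbeats 1000000 in
/-- Bound on the `y`-block of the stationarity gap by the successive differences of the
iterates plus the penalty term, for the concave case of HiBSA:
`(1/ρ)‖y^r − Py^{1/ρ}(y^r + ρ∇_y f(x^r, y^r))‖
 ≤ L_y‖x^{r+1} − x^r‖ + (1/ρ + L_y)‖y^{r+1} − y^r‖ + γ^r‖y^{r+1}‖`. -/
theorem hibsa_gap_y_bound_concave
    {n M : ℕ}
    -- Assumption A
    (X : Set (EuclideanSpace ℝ (Fin n))) (hXconv : Convex ℝ X) (hXcomp : IsCompact X)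
    (Y : Set (EuclideanSpace ℝ (Fin M))) (hYconv : Convex ℝ Y) (hYcomp : IsCompact Y)
    (f : EuclideanSpace ℝ (Fin n) → EuclideanSpace ℝ (Fin M) → ℝ)
    (g : EuclideanSpace ℝ (Fin M) → ℝ) (hgconv : ConvexOn ℝ Set.univ g)
    (Gfy : EuclideanSpace ℝ (Fin n) → EuclideanSpace ℝ (Fin M) → EuclideanSpace ℝ (Fin M))
    (hGfy : ∀ x y, HasGradientAt (fun z => f x z) (Gfy x y) y)
    (Ly : ℝ)
    (hLy : ∀ (x x' : EuclideanSpace ℝ (Fin n)) (y y' : EuclideanSpace ℝ (Fin M)),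
      x ∈ X → x' ∈ X → y ∈ Y → y' ∈ Y →
      ‖Gfy x' y' - Gfy x y‖ ≤ Ly * Real.sqrt (‖x' - x‖ ^ 2 + ‖y' - y‖ ^ 2))
    -- Assumption C-2 (concavity in y)
    (hC2 : ∀ (x : EuclideanSpace ℝ (Fin n)) (y z : EuclideanSpace ℝ (Fin M)),
      x ∈ X → z ∈ Y → y ∈ Y → f x y - f x z ≤ ⟪Gfy x z, y - z⟫)
    -- one regularized exact y-update from (x', y)
    (ρ γr : ℝ) (hρ : 0 < ρ) (hγr : 0 < γr)
    (x x' : EuclideanSpace ℝ (Fin n)) (hx : x ∈ X) (hx' : x' ∈ X)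
    (y y' : EuclideanSpace ℝ (Fin M)) (hy : y ∈ Y)
    (hyup : y' ∈ Y ∧ ∀ u ∈ Y,
      f x' u - g u - 1 / (2 * ρ) * ‖u - y‖ ^ 2 - γr / 2 * ‖u‖ ^ 2
        ≤ f x' y' - g y' - 1 / (2 * ρ) * ‖y' - y‖ ^ 2 - γr / 2 * ‖y'‖ ^ 2)
    -- the proximity operator
    (Py : EuclideanSpace ℝ (Fin M) → EuclideanSpace ℝ (Fin M))
    (hPy : ∀ w, Py w ∈ Y ∧
      ∀ z ∈ Y, -g z - 1 / (2 * ρ) * ‖z - w‖ ^ 2 ≤ -g (Py w) - 1 / (2 * ρ) * ‖Py w - w‖ ^ 2) :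
    -- conclusion
    ρ⁻¹ * ‖y - Py (y + ρ • Gfy x y)‖
      ≤ Ly * ‖x' - x‖ + (1 / ρ + Ly) * ‖y' - y‖ + γr * ‖y'‖ := by
  classical
  obtain ⟨hy'Y, hyopt⟩ := hyup
  set G : EuclideanSpace ℝ (Fin M) := Gfy x' y' with hG
  set v : EuclideanSpace ℝ (Fin M) := y + ρ • Gfy x y with hv
  set w : EuclideanSpace ℝ (Fin M) := y + ρ • G - (ρ * γr) • y' with hw
  obtain ⟨hPY, hPmax⟩ := hPy v
  -- VI for Py v
  have hVP : ∀ u ∈ Y, ⟪v - Py v, u - Py v⟫ ≤ ρ * (g u - g (Py v)) :=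
    proxVI hYconv hgconv hρ hPY hPmax
  -- VI for y'
  have hVy' : ∀ u ∈ Y, ⟪w - y', u - y'⟫ ≤ ρ * (g u - g y') := by
    intro u hu
    have hline : HasDerivAt (fun t : ℝ => y' + t • (u - y')) (u - y') 0 := by
      have h1 : HasDerivAt (fun t : ℝ => t • (u - y')) ((1:ℝ) • (u - y')) 0 :=
        (hasDerivAt_id 0).smul_const (u - y')
      simpa using (h1.const_add y')
    have h0 : y' + (0:ℝ) • (u - y') = y' := by simp
    have hfd : HasDerivAt (fun t : ℝ => f x' (y' + t • (u - y'))) (⟪G, u - y'⟫) 0 := by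
      have hF := (hGfy x' y').hasFDerivAt
      rw [← h0] at hF
      have := hF.comp_hasDerivAt 0 hline
      simp [InnerProductSpace.toDual_apply_apply] at this
      exact this
    have hq1 : HasDerivAt (fun t : ℝ => 1 / (2 * ρ) * ‖(y' + t • (u - y')) - y‖ ^ 2)
        (1 / (2 * ρ) * (2 * ⟪y' - y, u - y'⟫)) 0 := (lineDeriv_normsq y y' u).const_mul _
    have hq2 : HasDerivAt (fun t : ℝ => γr / 2 * ‖y' + t • (u - y')‖ ^ 2)
        (γr / 2 * (2 * ⟪y' - 0, u - y'⟫)) 0 := by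
      have := (lineDeriv_normsq 0 y' u).const_mul (γr / 2)
      simpa [sub_zero] using this
    have hd : HasDerivAt
        (fun t : ℝ => f x' (y' + t • (u - y')) - 1 / (2 * ρ) * ‖(y' + t • (u - y')) - y‖ ^ 2
          - γr / 2 * ‖y' + t • (u - y')‖ ^ 2)
        (⟪G, u - y'⟫ - 1 / (2 * ρ) * (2 * ⟪y' - y, u - y'⟫)
          - γr / 2 * (2 * ⟪y' - 0, u - y'⟫)) 0 := (hfd.sub hq1).sub hq2
    have hkey := lemA (F := fun z => f x' z - 1 / (2 * ρ) * ‖z - y‖ ^ 2 - γr / 2 * ‖z‖ ^ 2)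
      hYconv hgconv hy'Y hu hd (fun z hz => by have := hyopt z hz; linarith)
    have e : (⟪w - y', u - y'⟫ : ℝ)
        = ρ * (⟪G, u - y'⟫ - 1 / (2 * ρ) * (2 * ⟪y' - y, u - y'⟫)
            - γr / 2 * (2 * ⟪y' - 0, u - y'⟫)) := by
      rw [hw]
      simp only [sub_zero, inner_sub_left, inner_add_left, real_inner_smul_left]
      field_simp
      ring
    rw [e]
    exact mul_le_mul_of_nonneg_left hkey (le_of_lt hρ)
  -- nonexpansiveness-type bound
  have hne : ‖y' - Py v‖ ≤ ‖w - v‖ := lemB hρ hy'Y hPY hVy' hVP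
  -- bound on ‖w - v‖
  have hwv : ‖w - v‖ ≤ ρ * ‖G - Gfy x y‖ + ρ * γr * ‖y'‖ := by
    have e : w - v = ρ • (G - Gfy x y) - (ρ * γr) • y' := by
      rw [hw, hv, smul_sub]; abel
    rw [e]
    refine (norm_sub_le _ _).trans ?_
    rw [norm_smul, norm_smul]
    simp [abs_of_pos hρ, abs_of_pos hγr, mul_assoc]
  -- Lipschitz bound on the gradient difference
  have hK : ‖G - Gfy x y‖ ≤ Ly * ‖x' - x‖ + Ly * ‖y' - y‖ := by
    by_cases hc : x' = x ∧ y' = y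
    · rw [hG, hc.1, hc.2]
      simp
    · have h := hLy x x' y y' hx hx' hy hy'Y
      have hpos : 0 < ‖x' - x‖ ^ 2 + ‖y' - y‖ ^ 2 := by
        rcases not_and_or.mp hc with h' | h'
        · have : 0 < ‖x' - x‖ := by
            rw [norm_pos_iff, sub_ne_zero]; exact h'
          nlinarith [sq_nonneg ‖y' - y‖]
        · have : 0 < ‖y' - y‖ := by
            rw [norm_pos_iff, sub_ne_zero]; exact h'
          nlinarith [sq_nonneg ‖x' - x‖]
      have hsp : 0 < Real.sqrt (‖x' - x‖ ^ 2 + ‖y' - y‖ ^ 2) := Real.sqrt_pos.mpr hpos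
      have hLy0 : 0 ≤ Ly := by nlinarith [norm_nonneg (Gfy x' y' - Gfy x y), h, hsp]
      have hs : Real.sqrt (‖x' - x‖ ^ 2 + ‖y' - y‖ ^ 2) ≤ ‖x' - x‖ + ‖y' - y‖ := by
        rw [show ‖x' - x‖ + ‖y' - y‖ = Real.sqrt ((‖x' - x‖ + ‖y' - y‖) ^ 2) from
          (Real.sqrt_sq (by positivity)).symm]
        exact Real.sqrt_le_sqrt (by nlinarith [norm_nonneg (x' - x), norm_nonneg (y' - y)])
      calc ‖G - Gfy x y‖ ≤ Ly * Real.sqrt (‖x' - x‖ ^ 2 + ‖y' - y‖ ^ 2) := h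
        _ ≤ Ly * (‖x' - x‖ + ‖y' - y‖) := mul_le_mul_of_nonneg_left hs hLy0
        _ = Ly * ‖x' - x‖ + Ly * ‖y' - y‖ := by ring
  -- assemble
  have htri : ‖y - Py v‖ ≤ ‖y' - y‖ + ‖y' - Py v‖ := by
    calc ‖y - Py v‖ = ‖(y - y') + (y' - Py v)‖ := by rw [sub_add_sub_cancel]
      _ ≤ ‖y - y'‖ + ‖y' - Py v‖ := norm_add_le _ _
      _ = ‖y' - y‖ + ‖y' - Py v‖ := by rw [norm_sub_rev]
  have hfinal : ‖y - Py v‖ ≤ ‖y' - y‖ + ρ * (Ly * ‖x' - x‖ + Ly * ‖y' - y‖) + ρ * γr * ‖y'‖ := by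
    have h5 : ρ * ‖G - Gfy x y‖ ≤ ρ * (Ly * ‖x' - x‖ + Ly * ‖y' - y‖) :=
      mul_le_mul_of_nonneg_left hK (le_of_lt hρ)
    linarith [htri, hne, hwv]
  have h6 : ρ⁻¹ * ‖y - Py v‖
      ≤ ρ⁻¹ * (‖y' - y‖ + ρ * (Ly * ‖x' - x‖ + Ly * ‖y' - y‖) + ρ * γr * ‖y'‖) :=
    mul_le_mul_of_nonneg_left hfinal (by positivity)
  calc ρ⁻¹ * ‖y - Py (y + ρ • Gfy x y)‖ = ρ⁻¹ * ‖y - Py v‖ := by rw [hv]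
    _ ≤ ρ⁻¹ * (‖y' - y‖ + ρ * (Ly * ‖x' - x‖ + Ly * ‖y' - y‖) + ρ * γr * ‖y'‖) := h6
    _ = Ly * ‖x' - x‖ + (1 / ρ + Ly) * ‖y' - y‖ + γr * ‖y'‖ := by field_simp; ring
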